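/- Let q be a prime power, k a positive integer, n = 2k, and let α ∈ F_{q^n} be a normal element over F_q. Let g ∈ F_q[x] be a monic divisor of x^n − 1 with deg g = k, let f = (x^n − 1)/g, and set β = L_f(α) ∈ F_{q^n}. If x − 1 divides g, then there exists u_0 ∈ F_q such that Ord(β + u) = g for all u ∈ F_q \ {u_0}. -/

import Mathlib

open Polynomial

/-- `Lf q f α = Σ aᵢ α^{qⁱ}`, the action of the linearized `q`-associate of `f` on `α`. -/
noncomputable def Lf (q : ℕ) {F E : Type*} [Field F] [Field E] [Algebra F E]
    (f : F[X]) (α : E) : E :=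
  f.sum fun i a => algebraMap F E a * α ^ q ^ i

/-- `α` is a primitive element: it generates the multiplicative group. -/
def IsPrimitiveElem {E : Type*} [Field E] (α : E) : Prop :=
  ∀ β : E, β ≠ 0 → ∃ j : ℕ, β = α ^ j

/-- `α` is `k`-normal over `F`: the `F`-span of `α, α^q, …, α^{q^{n-1}}` has dimension `n - k`. -/
def IskNormal (q n k : ℕ) {F E : Type*} [Field F] [Field E] [Algebra F E] (α : E) : Prop :=
  Module.finrank F ↥(Submodule.span F (Set.range fun i : Fin n => α ^ q ^ (i : ℕ))) = n - k

/-- `g` is the `F_q`-order of `α`: the monic polynomial of least degree with `L_g(α) = 0`. -/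
def IsOrd (q : ℕ) {F E : Type*} [Field F] [Field E] [Algebra F E] (α : E) (g : F[X]) : Prop :=
  g.Monic ∧ Lf q g α = 0 ∧ ∀ h : F[X], h.Monic → Lf q h α = 0 → g.degree ≤ h.degree

/-- `α` is `m`-free: for every divisor `d > 1` of `m`, `α` is not a `d`-th power. -/
def IsMFree {E : Type*} [Field E] (m : ℕ) (α : E) : Prop :=
  ∀ d : ℕ, d ∣ m → 1 < d → ¬ ∃ β : E, β ^ d = α

/-- Property (A) (with `n = 2k`): `g` is a monic divisor of `x^{2k} - 1` of degree `k`,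
`g ≠ x^k - 1`, and `(x - 1) ∣ g`. -/
def SatisfiesA {F : Type*} [Field F] (k : ℕ) (g : F[X]) : Prop :=
  g.Monic ∧ g ∣ (X ^ (2 * k) - 1) ∧ g.natDegree = k ∧ g ≠ X ^ k - 1 ∧ (X - 1 : F[X]) ∣ g

/-- `W(t) = 2^{ω(t)}`, the number of squarefree divisors of the positive integer `t`. -/
def Wnat (t : ℕ) : ℕ := 2 ^ t.primeFactors.card

/-- `W(f)`, the number of squarefree monic divisors of the polynomial `f`. -/
noncomputable def Wpoly {F : Type*} [Field F] (f : F[X]) : ℕ :=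
  Nat.card {d : F[X] // d.Monic ∧ Squarefree d ∧ d ∣ f}

section Aux

variable {q : ℕ} {F E : Type*} [Field F] [Fintype F] [Field E] [Algebra F E]

/-- The `q`-power map as an `F`-linear endomorphism of `E`. -/
noncomputable def sigmaL (hF : Fintype.card F = q)
    (hadd : ∀ x y : E, (x + y) ^ q = x ^ q + y ^ q) : E →ₗ[F] E where
  toFun x := x ^ q
  map_add' := hadd
  map_smul' a x := by
    simp only [RingHom.id_apply, Algebra.smul_def, mul_pow, ← map_pow]
    rw [show a ^ q = a from by rw [← hF]; exact FiniteField.pow_card a]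

@[simp] lemma sigmaL_apply (hF : Fintype.card F = q)
    (hadd : ∀ x y : E, (x + y) ^ q = x ^ q + y ^ q) (x : E) :
    sigmaL hF hadd x = x ^ q := rfl

lemma sigmaL_pow_apply (hF : Fintype.card F = q)
    (hadd : ∀ x y : E, (x + y) ^ q = x ^ q + y ^ q) (i : ℕ) (x : E) :
    ((sigmaL hF hadd) ^ i) x = x ^ q ^ i := by
  induction i generalizing x with
  | zero => simp
  | succ i ih =>
    rw [pow_succ, Module.End.mul_apply, ih, sigmaL_apply, ← pow_mul, ← pow_succ']

lemma Lf_eq_aeval (hF : Fintype.card F = q)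
    (hadd : ∀ x y : E, (x + y) ^ q = x ^ q + y ^ q) (h : F[X]) (γ : E) :
    Lf q h γ = Polynomial.aeval (sigmaL hF hadd) h γ := by
  rw [Lf, Polynomial.aeval_def, Polynomial.eval₂_eq_sum, Polynomial.sum_def,
    Polynomial.sum_def, LinearMap.coe_sum, Finset.sum_apply]
  refine Finset.sum_congr rfl fun i _ => ?_
  rw [Module.End.mul_apply, Module.algebraMap_end_apply, sigmaL_pow_apply, Algebra.smul_def]

end Aux

/-- with `n = 2k`, `α` normal, `g` a monic degree-`k` divisor of `x^n - 1`
with `(x-1) ∣ g`, `f = (x^n-1)/g` and `β = L_f(α)`, there is `u₀ ∈ F_q` with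
`Ord(β + u) = g` for all `u ≠ u₀`. -/
theorem stmt4 (q k : ℕ) (hq : IsPrimePow q) (hk : 0 < k)
    (F E : Type*) [Field F] [Fintype F] [Field E] [Fintype E] [Algebra F E]
    (hF : Fintype.card F = q) (hE : Fintype.card E = q ^ (2 * k))
    (α : E) (hα : IskNormal q (2 * k) 0 (F := F) α)
    (g f : F[X]) (hg : g.Monic) (hgdeg : g.natDegree = k)
    (hgf : g * f = X ^ (2 * k) - 1) (hx1 : (X - 1 : F[X]) ∣ g)
    (β : E) (hβ : β = Lf q f α) :
    ∃ u₀ : F, ∀ u : F, u ≠ u₀ → IsOrd q (β + algebraMap F E u) g := by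
  classical
  obtain ⟨p, m, hp, hm, hpm⟩ := hq
  have hp' : p.Prime := hp.nat_prime
  haveI : Fact p.Prime := ⟨hp'⟩
  have hq1 : 1 < q := by
    rw [← hpm]; exact Nat.one_lt_pow (by omega) hp'.one_lt
  -- char E = p
  haveI hcharE : CharP E p := by
    obtain ⟨p', hcp'⟩ := CharP.exists E
    haveI := hcp'
    obtain ⟨d, hp'', hcard⟩ := FiniteField.card E p'
    have hpow : p' ^ (d : ℕ) = p ^ (m * (2 * k)) := by
      rw [← hcard, hE, ← hpm, ← pow_mul]
    have hdvd : p ∣ p' ^ (d : ℕ) := by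
      rw [hpow]; exact dvd_pow_self p (by positivity)
    have : p = p' := ((Nat.prime_dvd_prime_iff_eq hp' hp'').mp
      (hp'.dvd_of_dvd_pow hdvd))
    exact this ▸ hcp'
  have hadd : ∀ x y : E, (x + y) ^ q = x ^ q + y ^ q := by
    intro x y; rw [← hpm]; exact add_pow_char_pow x y p m
  set σ := sigmaL hF hadd with hσ
  have hLf : ∀ (h : F[X]) (γ : E), Lf q h γ = Polynomial.aeval σ h γ :=
    Lf_eq_aeval hF hadd
  -- basic nonvanishing facts
  have hXn_monic : (X ^ (2 * k) - 1 : F[X]).Monic := by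
    have := Polynomial.monic_X_pow_sub_C (1 : F) (n := 2 * k) (by omega)
    simpa using this
  have hg0 : g ≠ 0 := hg.ne_zero
  have hf0 : f ≠ 0 := by
    intro h; rw [h, mul_zero] at hgf; exact hXn_monic.ne_zero hgf.symm
  have hdegXn : (X ^ (2 * k) - 1 : F[X]).natDegree = 2 * k := by
    have : (X ^ (2 * k) - C (1 : F)).natDegree = 2 * k :=
      Polynomial.natDegree_X_pow_sub_C
    simpa using this
  have hfdeg : f.natDegree = k := by
    have := Polynomial.natDegree_mul hg0 hf0
    rw [hgf, hdegXn, hgdeg] at this; omega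
  -- linear independence from normality
  have hli : LinearIndependent F (fun i : Fin (2 * k) => α ^ q ^ (i : ℕ)) := by
    rw [linearIndependent_iff_card_eq_finrank_span]
    simp only [IskNormal] at hα
    simpa [Set.finrank] using hα.symm
  have hnz : ∀ d : F[X], d ≠ 0 → d.natDegree < 2 * k → Lf q d α ≠ 0 := by
    intro d hd hdeg hzero
    apply hd
    have hsum : ∑ i : Fin (2 * k), d.coeff (i : ℕ) • α ^ q ^ (i : ℕ) = 0 := by
      rw [Fin.sum_univ_eq_sum_range (fun i => d.coeff i • α ^ q ^ i) (2 * k)]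
      rw [Lf, Polynomial.sum_over_range' d (by simp) (2 * k) hdeg] at hzero
      simpa [Algebra.smul_def] using hzero
    have hcoeff := Fintype.linearIndependent_iff.mp hli _ hsum
    ext j
    rcases lt_or_ge j (2 * k) with hj | hj
    · simpa using hcoeff ⟨j, hj⟩
    · simp [Polynomial.coeff_eq_zero_of_natDegree_lt (lt_of_lt_of_le hdeg hj)]
  -- L_g(β) = 0
  have hXnα : Polynomial.aeval σ (X ^ (2 * k) - 1 : F[X]) α = 0 := by
    rw [map_sub, map_one, Polynomial.aeval_X_pow, LinearMap.sub_apply,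
      Module.End.one_apply, sigmaL_pow_apply]
    rw [← hE, FiniteField.pow_card, sub_self]
  have hβg : Lf q g β = 0 := by
    rw [hβ, hLf, hLf, ← Module.End.mul_apply, ← map_mul, hgf, hXnα]
  -- evaluation at algebraMap elements
  have hLfu : ∀ (h : F[X]) (u : F),
      Lf q h (algebraMap F E u) = algebraMap F E (h.eval 1 * u) := by
    intro h u
    rw [Lf, Polynomial.eval_eq_sum, Polynomial.sum_def, Polynomial.sum_def,
      Finset.sum_mul, map_sum]
    refine Finset.sum_congr rfl fun i _ => ?_
    rw [← map_pow, show u ^ q ^ i = u from by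
        rw [← hF]; exact FiniteField.pow_card_pow i u, ← map_mul]
    ring_nf
  have hkey : ∀ (h : F[X]) (u : F),
      Lf q h (β + algebraMap F E u) = Lf q h β + algebraMap F E (h.eval 1 * u) := by
    intro h u
    rw [hLf, map_add, ← hLf, ← hLf, hLfu]
  -- the factor h₀ with g = (X-1) h₀
  obtain ⟨h₀, hh₀⟩ := hx1
  have hh₀0 : h₀ ≠ 0 := by
    intro h; rw [h, mul_zero] at hh₀; exact hg0 hh₀
  have hX1deg : (X - 1 : F[X]).natDegree = 1 := by
    simpa using Polynomial.natDegree_X_sub_C (1 : F)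
  have hX1ne : (X - 1 : F[X]) ≠ 0 := fun h => by
    rw [h] at hX1deg; simp at hX1deg
  have hh₀deg : 1 + h₀.natDegree = k := by
    have := Polynomial.natDegree_mul hX1ne hh₀0
    rw [← hh₀, hgdeg] at this
    rw [hX1deg] at this
    omega
  have hgeval : g.eval 1 = 0 := by rw [hh₀]; simp
  -- γc = L_{h₀}(β) lies in the base field
  set γc := Lf q h₀ β with hγc
  have hγcq : γc ^ q = γc := by
    have h1 : Polynomial.aeval σ (X - 1 : F[X]) γc = 0 := by
      rw [hγc, hLf, ← Module.End.mul_apply, ← map_mul, ← hh₀, ← hLf, hβg]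
    rw [map_sub, map_one, Polynomial.aeval_X, LinearMap.sub_apply,
      Module.End.one_apply] at h1
    have : σ γc = γc := by linear_combination (norm := module) h1
    simpa [hσ] using this
  -- fixed points of x ↦ x^q are in the image of F
  have hfix : ∀ γ : E, γ ^ q = γ → ∃ c : F, algebraMap F E c = γ := by
    intro γ hγ
    set T : Finset E := Finset.univ.image (algebraMap F E) with hT
    set P : E[X] := X ^ q - X with hP
    have hP0 : P ≠ 0 := by
      intro h
      have h2 : P.coeff q = 1 := by
        rw [hP, Polynomial.coeff_sub, Polynomial.coeff_X_pow, Polynomial.coeff_X]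
        simp [show ¬(1 : ℕ) = q by omega]
      rw [h] at h2; simp at h2
    have hroot : ∀ x : E, x ^ q = x → x ∈ P.roots.toFinset := by
      intro x hx
      rw [Multiset.mem_toFinset, Polynomial.mem_roots hP0]
      simp [Polynomial.IsRoot, hP, hx]
    have hTsub : T ⊆ P.roots.toFinset := by
      intro x hx
      rw [hT, Finset.mem_image] at hx
      obtain ⟨c, _, rfl⟩ := hx
      refine hroot _ ?_
      rw [← map_pow, show c ^ q = c from by rw [← hF]; exact FiniteField.pow_card c]
    have hcardP : P.roots.toFinset.card ≤ q := by
      refine le_trans (Multiset.toFinset_card_le _) ?_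
      refine le_trans (Polynomial.card_roots' P) ?_
      refine le_trans (Polynomial.natDegree_sub_le _ _) ?_
      simp only [Polynomial.natDegree_X_pow, Polynomial.natDegree_X]
      omega
    have hTcard : T.card = q := by
      rw [hT, Finset.card_image_of_injective _ (algebraMap F E).injective]
      simpa using hF
    have hTeq : T = P.roots.toFinset :=
      Finset.eq_of_subset_of_card_le hTsub (by omega)
    have : γ ∈ T := by rw [hTeq]; exact hroot γ hγ
    rw [hT, Finset.mem_image] at this
    obtain ⟨c, _, hc⟩ := this
    exact ⟨c, hc⟩
  obtain ⟨c, hc⟩ := hfix γc hγcq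
  have hγcne : γc ≠ 0 := by
    have : γc = Lf q (h₀ * f) α := by
      rw [hγc, hβ, hLf, hLf, ← Module.End.mul_apply, ← map_mul, hLf]
    rw [this]
    refine hnz _ (mul_ne_zero hh₀0 hf0) ?_
    rw [Polynomial.natDegree_mul hh₀0 hf0, hfdeg]; omega
  have hc0 : c ≠ 0 := by
    intro h; rw [h, map_zero] at hc; exact hγcne hc.symm
  -- choose u₀
  refine ⟨if h₀.eval 1 = 0 then 0 else -c / h₀.eval 1, ?_⟩
  intro u hu
  refine ⟨hg, ?_, ?_⟩
  · rw [hkey, hβg, hgeval, zero_mul, map_zero, add_zero]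
  · intro h hmono hzero
    set d := EuclideanDomain.gcd g h with hd
    have hd_g : d ∣ g := EuclideanDomain.gcd_dvd_left g h
    have hd_h : d ∣ h := EuclideanDomain.gcd_dvd_right g h
    have hd0 : d ≠ 0 := by
      intro h0
      exact hg0 ((EuclideanDomain.gcd_eq_zero_iff.mp h0).1)
    have hgz : Lf q g (β + algebraMap F E u) = 0 := by
      rw [hkey, hβg, hgeval, zero_mul, map_zero, add_zero]
    have hLd : Lf q d (β + algebraMap F E u) = 0 := by
      have hbez := EuclideanDomain.gcd_eq_gcd_ab g h
      have e1 : Polynomial.aeval σ (g * EuclideanDomain.gcdA g h) (β + algebraMap F E u) = 0 := by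
        rw [mul_comm, map_mul, Module.End.mul_apply, ← hLf g (β + algebraMap F E u), hgz, map_zero]
      have e2 : Polynomial.aeval σ (h * EuclideanDomain.gcdB g h) (β + algebraMap F E u) = 0 := by
        rw [mul_comm, map_mul, Module.End.mul_apply, ← hLf h (β + algebraMap F E u), hzero, map_zero]
      rw [hLf, hd, hbez, map_add (Polynomial.aeval σ), LinearMap.add_apply, e1, e2, add_zero]
    have hddeg : d.natDegree = g.natDegree := by
      by_contra hne
      have hdlt : d.natDegree < g.natDegree :=
        lt_of_le_of_ne (Polynomial.natDegree_le_of_dvd hd_g hg0) hne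
      obtain ⟨e, he⟩ := hd_g
      have he0 : e ≠ 0 := by
        intro h0; rw [h0, mul_zero] at he; exact hg0 he
      by_cases he1 : e.eval 1 = 0
      · -- case (a): (X-1) ∣ e
        obtain ⟨e', he'⟩ := (Polynomial.dvd_iff_isRoot (a := (1 : F)) (p := e)).mpr
          (by simpa [Polynomial.IsRoot] using he1)
        have hCX : (X - C (1 : F)) = X - 1 := by simp
        rw [hCX] at he'
        have hcanc : (X - 1 : F[X]) * (d * e') = (X - 1) * h₀ := by
          rw [← hh₀, he, he']; ring
        have hde' : d * e' = h₀ := mul_left_cancel₀ hX1ne hcanc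
        have hLh₀ : Lf q h₀ (β + algebraMap F E u) = 0 := by
          rw [hLf, ← hde', mul_comm, map_mul, Module.End.mul_apply,
            ← hLf d (β + algebraMap F E u), hLd, map_zero]
        rw [hkey, ← hγc, ← hc, ← map_add] at hLh₀
        have heq : c + h₀.eval 1 * u = 0 :=
          (map_eq_zero_iff (algebraMap F E) (algebraMap F E).injective).mp hLh₀
        by_cases hh1 : h₀.eval 1 = 0
        · rw [hh1, zero_mul, add_zero] at heq; exact hc0 heq
        · apply hu
          rw [if_neg hh1, eq_div_iff hh1]
          linear_combination heq
      · -- case (b): e(1) ≠ 0, so d(1) = 0 and L_d(β+u) = L_d(β) ≠ 0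
        have hdeval : d.eval 1 = 0 := by
          have : d.eval 1 * e.eval 1 = 0 := by
            rw [← Polynomial.eval_mul, ← he, hgeval]
          rcases mul_eq_zero.mp this with h' | h'
          · exact h'
          · exact absurd h' he1
        have : Lf q d (β + algebraMap F E u) = Lf q d β := by
          rw [hkey, hdeval, zero_mul, map_zero, add_zero]
        rw [this] at hLd
        have : Lf q d β = Lf q (d * f) α := by
          rw [hβ, hLf, hLf, ← Module.End.mul_apply, ← map_mul, hLf]
        rw [this] at hLd
        refine hnz (d * f) (mul_ne_zero hd0 hf0) ?_ hLd
        rw [Polynomial.natDegree_mul hd0 hf0, hfdeg, hgdeg] at *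
        omega
    -- conclude degree comparison
    have hdd : d.degree = g.degree := by
      rw [Polynomial.degree_eq_natDegree hd0, Polynomial.degree_eq_natDegree hg0, hddeg]
    rw [← hdd]
    exact Polynomial.degree_le_of_dvd hd_h hmono.ne_zero
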